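/- arXiv:1512.04219 — 3 statements merged into one kernel-verified Lean document; each statement's English description precedes it below -/
import Mathlib

section
/- Let r_A and r_B be vectors in ℝ³ with ‖r_A‖ ≤ π and ‖r_B‖ ≤ π, and let R_A = exp(S(r_A)) and R_B = exp(S(r_B)). Then arccos((trace(R_B · R_A) − 1)/2) ≤ ‖r_A + r_B‖, i.e. the angle of the composed rotation R_B R_A is at most ‖r_A − (−r_B)‖. -/
open Real Matrix

/-- The skew-symmetric matrix associated to a vector `r ∈ ℝ³`. -/
noncomputable def skew (r : EuclideanSpace ℝ (Fin 3)) : Matrix (Fin 3) (Fin 3) ℝ :=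
  !![0, -(r 2), r 1;
     r 2, 0, -(r 0);
     -(r 1), r 0, 0]

open NormedSpace
open scoped Nat

noncomputable def Qv (r : EuclideanSpace ℝ (Fin 3)) : ℝ := r 0 ^ 2 + r 1 ^ 2 + r 2 ^ 2

lemma norm_sq_eq_Qv (r : EuclideanSpace ℝ (Fin 3)) : ‖r‖ ^ 2 = Qv r := by
  rw [EuclideanSpace.norm_eq, Real.sq_sqrt (by positivity)]
  simp [Fin.sum_univ_three, Qv, Real.norm_eq_abs, sq_abs]

lemma skew_pow_three (r : EuclideanSpace ℝ (Fin 3)) :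
    skew r ^ 3 = (-(Qv r)) • skew r := by
  ext i j
  fin_cases i <;> fin_cases j <;>
    simp [skew, Qv, pow_succ, Matrix.mul_apply, Fin.sum_univ_three] <;> ring

lemma skew_mul_sq (r : EuclideanSpace ℝ (Fin 3)) :
    skew r * skew r ^ 2 = (-(Qv r)) • skew r := by
  rw [← pow_succ']; norm_num [skew_pow_three]

lemma skew_pow_odd (r : EuclideanSpace ℝ (Fin 3)) (n : ℕ) :
    skew r ^ (2 * n + 1) = ((-(Qv r)) ^ n) • skew r := by
  induction n with
  | zero => simp
  | succ n ih =>
    rw [show 2 * (n + 1) + 1 = (2 * n + 1) + 2 by ring, pow_add, ih, Matrix.smul_mul,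
      skew_mul_sq, smul_smul, ← pow_succ]

lemma skew_pow_even (r : EuclideanSpace ℝ (Fin 3)) (n : ℕ) :
    skew r ^ (2 * n + 2) = ((-(Qv r)) ^ n) • skew r ^ 2 := by
  rw [show 2 * n + 2 = (2 * n + 1) + 1 by ring, pow_succ, skew_pow_odd, Matrix.smul_mul, ← pow_two]

lemma skew_zero : skew 0 = 0 := by
  have h : ∀ i : Fin 3, (0 : EuclideanSpace ℝ (Fin 3)) i = 0 := fun i => rfl
  ext i j
  fin_cases i <;> fin_cases j <;>
    simp [skew, h, Matrix.vecHead, Matrix.vecTail]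

set_option maxHeartbeats 1000000 in
/-- Rodrigues' formula (valid also for `r = 0` by junk values `0/0 = 0`). -/
theorem exp_skew (r : EuclideanSpace ℝ (Fin 3)) :
    NormedSpace.exp (skew r) = 1 + (Real.sin ‖r‖ / ‖r‖) • skew r
      + ((1 - Real.cos ‖r‖) / ‖r‖ ^ 2) • skew r ^ 2 := by
  letI : SeminormedRing (Matrix (Fin 3) (Fin 3) ℝ) := Matrix.linftyOpSemiNormedRing
  letI : NormedRing (Matrix (Fin 3) (Fin 3) ℝ) := Matrix.linftyOpNormedRing
  letI : NormedAlgebra ℝ (Matrix (Fin 3) (Fin 3) ℝ) := Matrix.linftyOpNormedAlgebra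
  rcases eq_or_ne r 0 with rfl | hr
  · simp [skew_zero, NormedSpace.exp_zero]
  have ht : ‖r‖ ≠ 0 := norm_ne_zero_iff.mpr hr
  set t : ℝ := ‖r‖ with htdef
  have hQ : Qv r = t ^ 2 := (norm_sq_eq_Qv r).symm
  rw [exp_eq_tsum ℝ]
  refine HasSum.tsum_eq ?_
  set f : ℕ → Matrix (Fin 3) (Fin 3) ℝ := fun n => ((n ! : ℝ))⁻¹ • skew r ^ n with hf
  have hodd : HasSum (fun n : ℕ => f (2 * n + 1)) ((Real.sin t / t) • skew r) := by
    have h2 := ((Real.hasSum_sin t).div_const t).smul_const (skew r)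
    convert h2 using 2 with n
    rw [hf]
    simp only
    rw [skew_pow_odd, smul_smul, hQ]
    congr 1
    rw [neg_pow, ← pow_mul]
    field_simp
    ring
  have heven : HasSum (fun n : ℕ => f (2 * n))
      ((1:Matrix (Fin 3) (Fin 3) ℝ) + ((1 - Real.cos t) / t ^ 2) • skew r ^ 2) := by
    have hc1 : HasSum (fun n : ℕ => ((-1 : ℝ) ^ (n+1) * t ^ (2*(n+1)) / (2*(n+1))!))
        (Real.cos t - 1) := by
      have := (hasSum_nat_add_iff'
        (f := fun n : ℕ => ((-1 : ℝ) ^ n * t ^ (2*n) / (2*n)!)) 1).mpr (Real.hasSum_cos t)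
      simpa using this
    have hc2 := ((hc1.div_const (-(t^2))).smul_const (skew r ^ 2))
    have key : HasSum (fun n : ℕ => f (2 * (n+1)))
        (((Real.cos t - 1) / (-(t^2))) • skew r ^ 2) := by
      convert hc2 using 2 with n
      rw [hf]
      simp only
      rw [show 2 * (n + 1) = 2 * n + 2 by ring, skew_pow_even, smul_smul, hQ]
      congr 1
      rw [neg_pow, ← pow_mul]
      field_simp
      ring
    have key2 : HasSum (fun n : ℕ => (fun m : ℕ => f (2 * m)) (n + 1))
        ((1 + ((1 - Real.cos t) / t ^ 2) • skew r ^ 2)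
          - ∑ i ∈ Finset.range 1, f (2 * i)) := by
      simp only [Finset.range_one, Finset.sum_singleton]
      have hf0 : f (2 * 0) = 1 := by simp [hf]
      rw [hf0]
      rw [show ((Real.cos t - 1) / (-(t^2))) = (1 - Real.cos t)/t^2 by
        rw [div_neg, ← neg_div, neg_sub]] at key
      convert key using 1
      abel
    exact (hasSum_nat_add_iff' (f := fun m : ℕ => f (2 * m)) 1).mp key2
  have hsum := HasSum.even_add_odd heven hodd
  rw [add_right_comm]
  exact hsum

noncomputable def Dv (a b : EuclideanSpace ℝ (Fin 3)) : ℝ := a 0 * b 0 + a 1 * b 1 + a 2 * b 2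
set_option maxHeartbeats 1000000 in
lemma trace_rod (a b : EuclideanSpace ℝ (Fin 3)) (u v p q : ℝ) :
    Matrix.trace ((1 + p • skew b + q • skew b ^ 2) * (1 + u • skew a + v • skew a ^ 2))
      = 3 - 2 * v * Qv a - 2 * q * Qv b - 2 * p * u * Dv a b
        + q * v * ((Dv a b) ^ 2 + Qv a * Qv b) := by
  simp only [Matrix.trace, Matrix.diag, Matrix.mul_apply, Matrix.add_apply, Matrix.smul_apply,
    Matrix.one_fin_three, pow_two, Fin.sum_univ_three, skew, Qv, Dv, smul_eq_mul]
  norm_num [Matrix.cons_val_zero, Matrix.cons_val_one, Matrix.head_cons, Matrix.cons_val_two,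
    Matrix.tail_cons, Matrix.head_fin_const, Matrix.vecHead, Matrix.vecTail]
  ring

lemma sinc_antitone {x y : ℝ} (hx : 0 ≤ x) (hxy : x ≤ y) (hy : y ≤ π) :
    x * Real.sin y ≤ y * Real.sin x := by
  rcases (hx.trans hxy).eq_or_lt with hy0 | hy0
  · rw [← hy0]
    nlinarith [Real.sin_zero]
  have h := (strictConcaveOn_sin_Icc.concaveOn).2 (Set.mem_Icc.2 ⟨hx.trans hxy, hy⟩)
    (Set.mem_Icc.2 ⟨le_rfl, Real.pi_pos.le⟩) (show (0:ℝ) ≤ x / y by positivity)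
    (show (0:ℝ) ≤ 1 - x / y by
      rw [sub_nonneg]; exact div_le_one_of_le₀ hxy hy0.le) (by ring)
  simp only [smul_eq_mul, mul_zero, add_zero, Real.sin_zero] at h
  rw [div_mul_cancel₀ _ hy0.ne'] at h
  calc x * Real.sin y = (x / y * Real.sin y) * y := by field_simp
  _ ≤ Real.sin x * y := by nlinarith
  _ = y * Real.sin x := mul_comm _ _

lemma core_ineq {α β e σ : ℝ} (hα : 0 ≤ α) (hα' : α ≤ π / 2) (hβ : 0 ≤ β) (hβ' : β ≤ π / 2)
    (he : -1 ≤ e) (he' : e ≤ 1) (hσ : 0 ≤ σ) (hσ2 : σ ^ 2 = α ^ 2 + β ^ 2 + 2 * α * β * e) :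
    Real.cos σ ≤ Real.cos α * Real.cos β - Real.sin α * Real.sin β * e := by
  have hpi := Real.pi_pos
  rcases hα.eq_or_lt with rfl | hα0
  · have hσβ : σ = β := by
      rw [← Real.sqrt_sq hσ, ← Real.sqrt_sq hβ]
      congr 1
      nlinarith
    rw [hσβ]
    simp
  rcases hβ.eq_or_lt with rfl | hβ0
  · have hσα : σ = α := by
      rw [← Real.sqrt_sq hσ, ← Real.sqrt_sq hα]
      congr 1
      nlinarith
    rw [hσα]
    simp
  -- main case: α, β > 0
  have hsa : 0 < Real.sin α := Real.sin_pos_of_pos_of_lt_pi hα0 (by linarith)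
  have hsb : 0 < Real.sin β := Real.sin_pos_of_pos_of_lt_pi hβ0 (by linarith)
  have hαβ : 0 < α * β := mul_pos hα0 hβ0
  set K : ℝ := Real.sin α * Real.sin β / (α * β) with hK
  have hKpos : 0 < K := by positivity
  have hσhi : σ ≤ α + β := by
    rw [← pow_le_pow_iff_left₀ hσ (by linarith) (two_ne_zero)]
    nlinarith
  have hσlo : |α - β| ≤ σ := by
    rw [← Real.sqrt_sq_eq_abs, show σ = Real.sqrt (σ ^ 2) from (Real.sqrt_sq hσ).symm]
    apply Real.sqrt_le_sqrt
    nlinarith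
  have hMpi : α + β ≤ π := by linarith
  set g : ℝ → ℝ := fun u => Real.cos α * Real.cos β - K * (u ^ 2 - α ^ 2 - β ^ 2) / 2 - Real.cos u
    with hg
  have hderiv : ∀ u : ℝ, HasDerivAt g (Real.sin u - K * u) u := by
    intro u
    have h1 : HasDerivAt (fun u : ℝ => u ^ 2) (2 * u) u := by
      simpa using hasDerivAt_pow 2 u
    have h2 : HasDerivAt (fun u : ℝ => Real.cos α * Real.cos β
        - K * (u ^ 2 - α ^ 2 - β ^ 2) / 2) (-(K * u)) u := by
      have := (((h1.sub_const (α ^ 2 + β ^ 2)).const_mul K).div_const 2).const_sub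
        (Real.cos α * Real.cos β)
      refine (this.congr_deriv (by ring)).congr_of_eventuallyEq (Filter.Eventually.of_forall fun x => by ring)
    have h3 := h2.sub (Real.hasDerivAt_cos u)
    exact h3.congr_deriv (by ring)
  have hgm : g |α - β| = 0 := by
    rw [hg]
    simp only
    rw [Real.cos_abs, Real.cos_sub, hK]
    field_simp
    rw [sq_abs]; ring
  have hgM : g (α + β) = 0 := by
    rw [hg]
    simp only
    rw [Real.cos_add, hK]
    field_simp
    ring
  have key : 0 ≤ g σ := by
    rcases le_or_gt (K * σ) (Real.sin σ) with hcase | hcase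
    · have hmono : MonotoneOn g (Set.Icc (|α - β|) σ) := by
        apply monotoneOn_of_deriv_nonneg (convex_Icc _ _)
        · exact fun u _ => (hderiv u).continuousAt.continuousWithinAt
        · exact fun u _ => (hderiv u).differentiableAt.differentiableWithinAt
        · intro u hu
          rw [interior_Icc] at hu
          rw [(hderiv u).deriv, sub_nonneg]
          have hu0 : 0 ≤ u := (abs_nonneg _).trans hu.1.le
          have huσ : u ≤ σ := hu.2.le
          have hσπ : σ ≤ π := by linarith
          have hs := sinc_antitone hu0 huσ hσπ
          rcases hu0.eq_or_lt with h0 | h0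
          · rw [← h0]; simp
          · have hσ0 : 0 < σ := lt_of_lt_of_le h0 huσ
            rw [← mul_le_mul_iff_of_pos_right hσ0]
            calc K * u * σ = u * (K * σ) := by ring
            _ ≤ u * Real.sin σ := by nlinarith
            _ ≤ σ * Real.sin u := hs
            _ = Real.sin u * σ := mul_comm _ _
      have hle := hmono (Set.mem_Icc.2 ⟨le_rfl, hσlo⟩) (Set.mem_Icc.2 ⟨hσlo, le_rfl⟩) hσlo
      rw [hgm] at hle
      exact hle
    · have hσ0 : 0 < σ := by
        rcases hσ.eq_or_lt with h0 | h0
        · exfalso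
          rw [← h0] at hcase
          simp at hcase
        · exact h0
      have hanti : AntitoneOn g (Set.Icc σ (α + β)) := by
        apply antitoneOn_of_deriv_nonpos (convex_Icc _ _)
        · exact fun u _ => (hderiv u).continuousAt.continuousWithinAt
        · exact fun u _ => (hderiv u).differentiableAt.differentiableWithinAt
        · intro u hu
          rw [interior_Icc] at hu
          rw [(hderiv u).deriv, sub_nonpos]
          have huσ : σ ≤ u := hu.1.le
          have huπ : u ≤ π := by linarith [hu.2.le]
          have hs := sinc_antitone hσ huσ huπ
          rw [← mul_le_mul_iff_of_pos_left hσ0]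
          calc σ * Real.sin u ≤ u * Real.sin σ := hs
          _ ≤ u * (K * σ) := by nlinarith
          _ = σ * (K * u) := by ring
      have hle := hanti (Set.mem_Icc.2 ⟨le_rfl, hσhi⟩) (Set.mem_Icc.2 ⟨hσhi, le_rfl⟩) hσhi
      rw [hgM] at hle
      exact hle
  have he2 : K * (σ ^ 2 - α ^ 2 - β ^ 2) / 2 = Real.sin α * Real.sin β * e := by
    rw [hK, hσ2]
    field_simp
    ring
  rw [hg] at key
  simp only at key
  rw [he2] at key
  linarith

lemma inner_eq_Dv (a b : EuclideanSpace ℝ (Fin 3)) : (inner ℝ a b : ℝ) = Dv a b := by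
  simp [PiLp.inner_apply, RCLike.inner_apply, conj_trivial, Fin.sum_univ_three, Dv]
  ring

lemma Dv_zero_left (b : EuclideanSpace ℝ (Fin 3)) : Dv 0 b = 0 := by
  have h : ∀ i : Fin 3, (0 : EuclideanSpace ℝ (Fin 3)) i = 0 := fun i => rfl
  simp [Dv, h]

lemma Dv_zero_right (a : EuclideanSpace ℝ (Fin 3)) : Dv a 0 = 0 := by
  have h : ∀ i : Fin 3, (0 : EuclideanSpace ℝ (Fin 3)) i = 0 := fun i => rfl
  simp [Dv, h]

lemma Qv_zero : Qv (0 : EuclideanSpace ℝ (Fin 3)) = 0 := by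
  have h : ∀ i : Fin 3, (0 : EuclideanSpace ℝ (Fin 3)) i = 0 := fun i => rfl
  simp [Qv, h]

lemma arccos_le_of_cos_le {x s : ℝ} (hs0 : 0 ≤ s) (hsπ : s ≤ π) (h : Real.cos s ≤ x) :
    Real.arccos x ≤ s := by
  have h1 : Real.arcsin (Real.cos s) ≤ Real.arcsin x := Real.monotone_arcsin h
  have h2 : Real.arccos (Real.cos s) = s := Real.arccos_cos hs0 hsπ
  rw [Real.arccos] at h2 ⊢
  linarith

set_option maxHeartbeats 4000000 in
theorem angle_composed_rotation_le_dist
    (rA rB : EuclideanSpace ℝ (Fin 3)) (hA : ‖rA‖ ≤ π) (hB : ‖rB‖ ≤ π) :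
    Real.arccos ((Matrix.trace (NormedSpace.exp (skew rB) * NormedSpace.exp (skew rA)) - 1) / 2)
      ≤ ‖rA + rB‖ := by
  have hpi := Real.pi_pos
  have hs0 : 0 ≤ ‖rA + rB‖ := norm_nonneg _
  rcases le_or_gt π ‖rA + rB‖ with hs | hs
  · exact (Real.arccos_le_pi _).trans hs
  rw [exp_skew rA, exp_skew rB, trace_rod rA rB]
  have hQa : Qv rA = ‖rA‖ ^ 2 := (norm_sq_eq_Qv rA).symm
  have hQb : Qv rB = ‖rB‖ ^ 2 := (norm_sq_eq_Qv rB).symm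
  have hnorm : ‖rA + rB‖ ^ 2 = ‖rA‖ ^ 2 + 2 * Dv rA rB + ‖rB‖ ^ 2 := by
    rw [norm_add_sq_real, inner_eq_Dv]
  have hDle : |Dv rA rB| ≤ ‖rA‖ * ‖rB‖ := by
    rw [← inner_eq_Dv]; exact abs_real_inner_le_norm rA rB
  rcases eq_or_ne ‖rA‖ 0 with hA0 | hA0
  · -- rA = 0
    have hrA : rA = 0 := norm_eq_zero.mp hA0
    subst hrA
    rw [Qv_zero, Dv_zero_left]
    have hsb : ‖(0 : EuclideanSpace ℝ (Fin 3)) + rB‖ = ‖rB‖ := by rw [zero_add]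
    rcases eq_or_ne ‖rB‖ 0 with hB0 | hB0
    · have hrB : rB = 0 := norm_eq_zero.mp hB0
      subst hrB
      rw [Qv_zero]
      norm_num
    · have harg : (3 - 2 * ((1 - Real.cos ‖(0 : EuclideanSpace ℝ (Fin 3))‖) / ‖(0 : EuclideanSpace ℝ (Fin 3))‖ ^ 2) * 0
          - 2 * ((1 - Real.cos ‖rB‖) / ‖rB‖ ^ 2) * Qv rB
          - 2 * (Real.sin ‖rB‖ / ‖rB‖) * (Real.sin ‖(0 : EuclideanSpace ℝ (Fin 3))‖ / ‖(0 : EuclideanSpace ℝ (Fin 3))‖) * 0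
          + (1 - Real.cos ‖rB‖) / ‖rB‖ ^ 2 * ((1 - Real.cos ‖(0 : EuclideanSpace ℝ (Fin 3))‖) / ‖(0 : EuclideanSpace ℝ (Fin 3))‖ ^ 2) * (0 ^ 2 + 0 * Qv rB) - 1) / 2
          = Real.cos ‖rB‖ := by
        rw [hQb]
        field_simp
        ring
      rw [harg, hsb, Real.arccos_cos (norm_nonneg _) hB]
  · rcases eq_or_ne ‖rB‖ 0 with hB0 | hB0
    · have hrB : rB = 0 := norm_eq_zero.mp hB0
      subst hrB
      rw [Qv_zero, Dv_zero_right]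
      have hsa : ‖rA + (0 : EuclideanSpace ℝ (Fin 3))‖ = ‖rA‖ := by rw [add_zero]
      have harg : (3 - 2 * ((1 - Real.cos ‖rA‖) / ‖rA‖ ^ 2) * Qv rA
          - 2 * ((1 - Real.cos ‖(0 : EuclideanSpace ℝ (Fin 3))‖) / ‖(0 : EuclideanSpace ℝ (Fin 3))‖ ^ 2) * 0
          - 2 * ((Real.sin ‖(0 : EuclideanSpace ℝ (Fin 3))‖) / ‖(0 : EuclideanSpace ℝ (Fin 3))‖) * (Real.sin ‖rA‖ / ‖rA‖) * 0
          + (1 - Real.cos ‖(0 : EuclideanSpace ℝ (Fin 3))‖) / ‖(0 : EuclideanSpace ℝ (Fin 3))‖ ^ 2 * ((1 - Real.cos ‖rA‖) / ‖rA‖ ^ 2) * (0 ^ 2 + Qv rA * 0) - 1) / 2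
          = Real.cos ‖rA‖ := by
        rw [hQa]
        field_simp
        ring
      rw [harg, hsa, Real.arccos_cos (norm_nonneg _) hA]
    · -- main case
      set ta := ‖rA‖ with hta
      set tb := ‖rB‖ with htb
      set s := ‖rA + rB‖ with hsdef
      have hta0 : 0 < ta := lt_of_le_of_ne (norm_nonneg rA) (Ne.symm hA0)
      have htb0 : 0 < tb := lt_of_le_of_ne (norm_nonneg rB) (Ne.symm hB0)
      set D := Dv rA rB with hDdef
      set e : ℝ := D / (ta * tb) with he
      have htatb : 0 < ta * tb := mul_pos hta0 htb0
      have hDe : D = e * (ta * tb) := by rw [he]; field_simp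
      have habs := abs_le.mp hDle
      have he1 : -1 ≤ e := by
        rw [he, le_div_iff₀ htatb]; linarith [habs.1]
      have he2 : e ≤ 1 := by
        rw [he, div_le_iff₀ htatb]; linarith [habs.2]
      have hs2 : s ^ 2 = ta ^ 2 + tb ^ 2 + 2 * e * (ta * tb) := by
        linear_combination hnorm + 2 * hDe
      have hσ2 : (s / 2) ^ 2 = (ta / 2) ^ 2 + (tb / 2) ^ 2 + 2 * (ta / 2) * (tb / 2) * e := by
        linear_combination hs2 / 4
      have hW := core_ineq (by positivity) (by linarith) (by positivity) (by linarith)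
        he1 he2 (by positivity) hσ2
      apply arccos_le_of_cos_le hs0 hs.le
      have hcs : Real.cos s = 2 * Real.cos (s / 2) ^ 2 - 1 := by
        have h := Real.cos_two_mul (s / 2)
        rw [show 2 * (s / 2) = s by ring] at h
        exact h
      have hC0 : 0 ≤ Real.cos (s / 2) :=
        Real.cos_nonneg_of_mem_Icc ⟨by linarith, by linarith⟩
      have hsta : Real.sin ta = 2 * Real.sin (ta / 2) * Real.cos (ta / 2) := by
        have h := Real.sin_two_mul (ta / 2)
        rw [show 2 * (ta / 2) = ta by ring] at h
        exact h
      have hstb : Real.sin tb = 2 * Real.sin (tb / 2) * Real.cos (tb / 2) := by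
        have h := Real.sin_two_mul (tb / 2)
        rw [show 2 * (tb / 2) = tb by ring] at h
        exact h
      have hcta : Real.cos ta = 2 * Real.cos (ta / 2) ^ 2 - 1 := by
        have h := Real.cos_two_mul (ta / 2)
        rw [show 2 * (ta / 2) = ta by ring] at h
        exact h
      have hctb : Real.cos tb = 2 * Real.cos (tb / 2) ^ 2 - 1 := by
        have h := Real.cos_two_mul (tb / 2)
        rw [show 2 * (tb / 2) = tb by ring] at h
        exact h
      have hPa : Real.sin (ta / 2) ^ 2 + Real.cos (ta / 2) ^ 2 = 1 := Real.sin_sq_add_cos_sq _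
      have hPb : Real.sin (tb / 2) ^ 2 + Real.cos (tb / 2) ^ 2 = 1 := Real.sin_sq_add_cos_sq _
      have step1 : (3 - 2 * ((1 - Real.cos ta) / ta ^ 2) * Qv rA
          - 2 * ((1 - Real.cos tb) / tb ^ 2) * Qv rB
          - 2 * (Real.sin tb / tb) * (Real.sin ta / ta) * D
          + (1 - Real.cos tb) / tb ^ 2 * ((1 - Real.cos ta) / ta ^ 2) * (D ^ 2 + Qv rA * Qv rB)
          - 1) / 2
          = (Real.cos ta + Real.cos tb + Real.cos ta * Real.cos tb - 1) / 2
            - Real.sin ta * Real.sin tb * e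
            + (1 - Real.cos ta) * (1 - Real.cos tb) * e ^ 2 / 2 := by
        rw [hQa, hQb, hDe]
        field_simp
        ring
      have step2 : (Real.cos ta + Real.cos tb + Real.cos ta * Real.cos tb - 1) / 2
            - Real.sin ta * Real.sin tb * e
            + (1 - Real.cos ta) * (1 - Real.cos tb) * e ^ 2 / 2
          = 2 * (Real.cos (ta / 2) * Real.cos (tb / 2)
              - Real.sin (ta / 2) * Real.sin (tb / 2) * e) ^ 2 - 1 := by
        rw [hsta, hstb, hcta, hctb]
        linear_combination (-2 * e ^ 2 * (1 - Real.cos (tb / 2) ^ 2)) * hPa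
          + (-2 * e ^ 2 * Real.sin (ta / 2) ^ 2) * hPb
      calc Real.cos s = 2 * Real.cos (s / 2) ^ 2 - 1 := hcs
        _ ≤ 2 * (Real.cos (ta / 2) * Real.cos (tb / 2)
              - Real.sin (ta / 2) * Real.sin (tb / 2) * e) ^ 2 - 1 := by
            have h1 := pow_le_pow_left₀ hC0 hW 2
            linarith
        _ = _ := by linear_combination (-1 : ℝ) * step1 - step2
end

section
/- For all a, b ∈ [−π/2, π/2] and all d ∈ [0, 1]: (arccos(d·cos a + (1 − d)·cos b))² ≤ d·a² + (1 − d)·b². -/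
open Real

lemma sinc_anti {x y : ℝ} (hx : 0 < x) (hxy : x ≤ y) (hy : y ≤ π / 2) :
    Real.sin y / y ≤ Real.sin x / x := by
  have h := antitoneOn_of_deriv_nonpos (convex_Icc x y)
    (f := fun t => Real.sin t / t) ?_ ?_ ?_
  · exact h (Set.left_mem_Icc.2 hxy) (Set.right_mem_Icc.2 hxy) hxy
  · exact (Real.continuous_sin.continuousOn).div continuousOn_id fun t ht => by
      rintro rfl
      exact absurd ht.1 (not_le.2 hx)
  · intro t ht
    rw [interior_Icc] at ht
    have ht0 : t ≠ 0 := ne_of_gt (hx.trans ht.1)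
    exact ((Real.differentiable_sin t).hasDerivAt.div (hasDerivAt_id t) ht0).differentiableAt.differentiableWithinAt
  · intro t ht
    rw [interior_Icc] at ht
    have ht0 : 0 < t := hx.trans ht.1
    have hlt : t < π / 2 := lt_of_lt_of_le ht.2 hy
    have hderiv : HasDerivAt (fun t => Real.sin t / t)
        ((Real.cos t * t - Real.sin t * 1) / t ^ 2) t :=
      (Real.hasDerivAt_sin t).div (hasDerivAt_id t) (ne_of_gt ht0)
    rw [hderiv.deriv]
    apply div_nonpos_of_nonpos_of_nonneg _ (sq_nonneg t)
    have hcos : 0 < Real.cos t := Real.cos_pos_of_mem_Ioo ⟨by linarith [Real.pi_pos], hlt⟩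
    have := Real.lt_tan ht0 hlt
    rw [Real.tan_eq_sin_div_cos, lt_div_iff₀ hcos] at this
    nlinarith

lemma convexOn_cos_sqrt : ConvexOn ℝ (Set.Icc 0 ((π / 2) ^ 2)) (fun x => Real.cos (Real.sqrt x)) := by
  apply MonotoneOn.convexOn_of_deriv (convex_Icc _ _)
  · exact Real.continuous_cos.comp_continuousOn Real.continuous_sqrt.continuousOn
  · intro t ht
    rw [interior_Icc] at ht
    exact (((Real.hasDerivAt_sqrt (ne_of_gt ht.1)).cos)).differentiableAt.differentiableWithinAt
  · intro u hu v hv huv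
    rw [interior_Icc] at hu hv
    have hdu := ((Real.hasDerivAt_sqrt (ne_of_gt hu.1)).cos).deriv
    have hdv := ((Real.hasDerivAt_sqrt (ne_of_gt hv.1)).cos).deriv
    rw [hdu, hdv]
    have hsu : 0 < Real.sqrt u := Real.sqrt_pos.2 hu.1
    have hsv : 0 < Real.sqrt v := Real.sqrt_pos.2 hv.1
    have hle : Real.sqrt u ≤ Real.sqrt v := Real.sqrt_le_sqrt huv
    have hv2 : Real.sqrt v ≤ π / 2 := by
      have := Real.sqrt_le_sqrt (le_of_lt hv.2)
      rwa [Real.sqrt_sq (by positivity : (0:ℝ) ≤ π / 2)] at this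
    have key := sinc_anti hsu hle hv2
    rw [div_le_div_iff₀ hsv hsu] at key
    rw [neg_mul, neg_mul, neg_le_neg_iff, mul_one_div, mul_one_div,
      div_le_div_iff₀ (by positivity) (by positivity)]
    nlinarith

theorem sq_arccos_combination_le (a b d : ℝ)
    (ha : a ∈ Set.Icc (-(π / 2)) (π / 2)) (hb : b ∈ Set.Icc (-(π / 2)) (π / 2))
    (hd : d ∈ Set.Icc (0 : ℝ) 1) :
    (Real.arccos (d * Real.cos a + (1 - d) * Real.cos b)) ^ 2
      ≤ d * a ^ 2 + (1 - d) * b ^ 2 := by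
  obtain ⟨hd0, hd1⟩ := hd
  have haq : a ^ 2 ∈ Set.Icc (0:ℝ) ((π / 2) ^ 2) := by
    constructor
    · positivity
    · rw [← sq_abs]
      exact pow_le_pow_left₀ (abs_nonneg a) (abs_le.2 ⟨ha.1, ha.2⟩) 2
  have hbq : b ^ 2 ∈ Set.Icc (0:ℝ) ((π / 2) ^ 2) := by
    constructor
    · positivity
    · rw [← sq_abs]
      exact pow_le_pow_left₀ (abs_nonneg b) (abs_le.2 ⟨hb.1, hb.2⟩) 2
  set s := d * a ^ 2 + (1 - d) * b ^ 2 with hs_def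
  have hs_mem : s ∈ Set.Icc (0:ℝ) ((π / 2) ^ 2) :=
    (convex_Icc _ _) haq hbq hd0 (by linarith) (by ring)
  have hs0 : 0 ≤ s := hs_mem.1
  have hkey := convexOn_cos_sqrt.2 haq hbq hd0 (by linarith : (0:ℝ) ≤ 1 - d) (by ring)
  simp only [smul_eq_mul] at hkey
  rw [Real.sqrt_sq_eq_abs, Real.sqrt_sq_eq_abs, Real.cos_abs, Real.cos_abs] at hkey
  -- hkey : cos √s ≤ d * cos a + (1 - d) * cos b
  have hsqrt_le : Real.sqrt s ≤ π / 2 := by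
    have := Real.sqrt_le_sqrt hs_mem.2
    rwa [Real.sqrt_sq (by positivity : (0:ℝ) ≤ π / 2)] at this
  have harccos : Real.arccos (d * Real.cos a + (1 - d) * Real.cos b) ≤ Real.sqrt s := by
    have h1 : Real.arccos (d * Real.cos a + (1 - d) * Real.cos b)
        ≤ Real.arccos (Real.cos (Real.sqrt s)) := by
      simp only [Real.arccos]
      have := Real.monotone_arcsin hkey
      linarith
    rwa [Real.arccos_cos (Real.sqrt_nonneg s) (by linarith [Real.pi_pos] : Real.sqrt s ≤ π)] at h1
  calc (Real.arccos (d * Real.cos a + (1 - d) * Real.cos b)) ^ 2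
      ≤ (Real.sqrt s) ^ 2 := pow_le_pow_left₀ (Real.arccos_nonneg _) harccos 2
    _ = s := Real.sq_sqrt hs0
end

section
/- The function f(x) = (arccos x)² is convex on the interval [0, 1]. -/
open Real Set

lemma aux_key_ineq {x : ℝ} (hx0 : 0 < x) (hx1 : x < 1) :
    x * Real.arccos x ≤ Real.sqrt (1 - x ^ 2) := by
  set θ := Real.arccos x with hθ
  have hθpos : 0 < θ := Real.arccos_pos.2 hx1
  have hθlt : θ < π / 2 := (Real.arccos_lt_pi_div_two).2 hx0
  have hcos : Real.cos θ = x := Real.cos_arccos (by linarith) hx1.le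
  have hsin : Real.sin θ = Real.sqrt (1 - x ^ 2) := Real.sin_arccos x
  have htan : θ < Real.tan θ := Real.lt_tan hθpos hθlt
  have hcospos : 0 < Real.cos θ := by rw [hcos]; exact hx0
  have := (mul_lt_mul_of_pos_left htan hcospos)
  rw [Real.tan_eq_sin_div_cos, mul_div_cancel₀ _ hcospos.ne'] at this
  nlinarith [this, hcos, hsin]

theorem arccos_sq_convexOn :
    ConvexOn ℝ (Set.Icc (0 : ℝ) 1) (fun x => (Real.arccos x) ^ 2) := by
  have hIcc : interior (Set.Icc (0:ℝ) 1) = Set.Ioo 0 1 := interior_Icc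
  set f' : ℝ → ℝ := fun x => 2 * Real.arccos x * (-(1 / Real.sqrt (1 - x ^ 2))) with hf'def
  set f'' : ℝ → ℝ := fun x =>
    2 * ((1 / Real.sqrt (1 - x ^ 2)) ^ 2 +
      Real.arccos x * (-x / (Real.sqrt (1 - x ^ 2)) ^ 3)) with hf''def
  refine convexOn_of_hasDerivWithinAt2_nonneg (convex_Icc 0 1)
    (Real.continuous_arccos.continuousOn.pow 2) (f' := f') (f'' := f'') ?_ ?_ ?_
  · intro x hx
    rw [hIcc] at hx
    have h1 : x ≠ -1 := by intro h; rw [h] at hx; exact absurd hx.1 (by norm_num)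
    have h2 : x ≠ 1 := hx.2.ne
    have := ((Real.hasDerivAt_arccos h1 h2).pow 2)
    have heq : (2:ℕ) * Real.arccos x ^ (2 - 1) * -(1 / √(1 - x ^ 2))
        = f' x := by simp [hf'def]
    rw [heq] at this
    exact this.hasDerivWithinAt
  · intro x hx
    rw [hIcc] at hx
    have h1 : x ≠ -1 := by intro h; rw [h] at hx; exact absurd hx.1 (by norm_num)
    have h2 : x ≠ 1 := hx.2.ne
    have hx2 : (0:ℝ) < 1 - x ^ 2 := by nlinarith [hx.1, hx.2]
    have hs : 0 < Real.sqrt (1 - x ^ 2) := Real.sqrt_pos.2 hx2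
    -- derivative of sqrt(1 - x^2)
    have hinner : HasDerivAt (fun y : ℝ => 1 - y ^ 2) (-(2 * x)) x := by
      simpa using ((hasDerivAt_pow 2 x).const_sub 1)
    have hsqrt : HasDerivAt (fun y : ℝ => Real.sqrt (1 - y ^ 2))
        (-(2 * x) / (2 * Real.sqrt (1 - x ^ 2))) x := by
      have h := (Real.hasDerivAt_sqrt hx2.ne').comp x hinner
      simp only [Function.comp_def] at h
      refine h.congr_deriv ?_
      ring
    -- derivative of -(1 / sqrt(1 - x^2))
    have hinv : HasDerivAt (fun y : ℝ => -(1 / Real.sqrt (1 - y ^ 2)))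
        (-x / (Real.sqrt (1 - x ^ 2)) ^ 3) x := by
      have h := (hsqrt.inv hs.ne').neg
      simp only [one_div]
      refine h.congr_deriv ?_
      field_simp
    have harccos := Real.hasDerivAt_arccos h1 h2
    have hprod : HasDerivAt f'
        (2 * (-(1 / Real.sqrt (1 - x ^ 2))) * (-(1 / Real.sqrt (1 - x ^ 2)))
          + 2 * Real.arccos x * (-x / (Real.sqrt (1 - x ^ 2)) ^ 3)) x := by
      simpa [hf'def, Pi.mul_def] using ((harccos.const_mul 2).mul hinv)
    have heq : 2 * (-(1 / Real.sqrt (1 - x ^ 2))) * (-(1 / Real.sqrt (1 - x ^ 2)))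
          + 2 * Real.arccos x * (-x / (Real.sqrt (1 - x ^ 2)) ^ 3) = f'' x := by
      simp only [hf''def]; ring
    rw [heq] at hprod
    exact hprod.hasDerivWithinAt
  · intro x hx
    rw [hIcc] at hx
    have hx2 : (0:ℝ) < 1 - x ^ 2 := by nlinarith [hx.1, hx.2]
    have hs : 0 < Real.sqrt (1 - x ^ 2) := Real.sqrt_pos.2 hx2
    have hkey := aux_key_ineq hx.1 hx.2
    have hssq : Real.sqrt (1 - x ^ 2) ^ 2 = 1 - x ^ 2 := Real.sq_sqrt hx2.le
    simp only [hf''def]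
    have h3 : 0 < Real.sqrt (1 - x ^ 2) ^ 3 := by positivity
    rw [div_pow, hssq]
    have : (1 : ℝ) / (1 - x ^ 2) + Real.arccos x * (-x / Real.sqrt (1 - x ^ 2) ^ 3)
        = (Real.sqrt (1 - x ^ 2) - x * Real.arccos x) / Real.sqrt (1 - x ^ 2) ^ 3 := by
      rw [← hssq]
      field_simp
      rw [Real.sqrt_sq hs.le]
      ring
    rw [one_pow, this]
    have hnn := div_nonneg (sub_nonneg.2 hkey) h3.le
    linarith
end
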